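/- Mirror descent rate without convexity: in the mirror descent setup with surrogate g(β;β⁻) = f(β) + (ρ D_φ − Δ_f)(β,β⁻), suppose Δ_f ≤ L D̄_φ for some L > 0 (i.e., Δ_f(β,γ) ≤ L·(D_φ(β,γ)+D_φ(γ,β))/2 for all β,γ), inf_β f(β) ≥ 0, and ρ > L/2. Then avg_{0≤t≤T} D̄_φ(β^{(t)}, β^{(t+1)}) ≤ f(β^{(0)})/((T+1)(2ρ−L)). -/

import Mathlib

open Filter Topology Set RealInnerProductSpace

noncomputable section

def HasDirDeriv {E : Type*} [AddCommGroup E] [Module ℝ E] (ψ : E → ℝ) (β h : E) (d : ℝ) : Prop :=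
  Tendsto (fun ε : ℝ => (ψ (β + ε • h) - ψ β) / ε) (𝓝[>] (0:ℝ)) (𝓝 d)

def GBF {E : Type*} [AddCommGroup E] [Module ℝ E] (ψ : E → ℝ) (δ : E → E → ℝ) (β γ : E) : ℝ :=
  ψ β - ψ γ - δ γ (β - γ)

/-- Bregman divergence of a differentiable function on Euclidean space. -/
def BregDiv {p : ℕ} (φ : EuclideanSpace ℝ (Fin p) → ℝ) (β γ : EuclideanSpace ℝ (Fin p)) : ℝ :=
  φ β - φ γ - ⟪gradient φ γ, β - γ⟫

lemma dirDeriv_smul {E : Type*} [AddCommGroup E] [Module ℝ E] (ψ : E → ℝ) (β h : E)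
    (c d d' : ℝ) (hc : 0 < c) (h1 : HasDirDeriv ψ β h d) (h2 : HasDirDeriv ψ β (c • h) d') :
    d' = c * d := by
  have hmap : Tendsto (fun ε : ℝ => c * ε) (𝓝[>] (0:ℝ)) (𝓝[>] (0:ℝ)) := by
    apply tendsto_nhdsWithin_of_tendsto_nhds_of_eventually_within
    · have : Tendsto (fun ε : ℝ => c * ε) (𝓝 (0:ℝ)) (𝓝 (c*0)) := (tendsto_id.const_mul c)
      simpa using this.mono_left nhdsWithin_le_nhds
    · filter_upwards [self_mem_nhdsWithin] with ε (hε : 0 < ε)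
      exact mul_pos hc hε
  have h3 : Tendsto (fun ε : ℝ => c * ((ψ (β + (c * ε) • h) - ψ β) / (c * ε)))
      (𝓝[>] (0:ℝ)) (𝓝 (c * d)) := ((h1.comp hmap).const_mul c)
  have heq : (fun ε : ℝ => (ψ (β + ε • (c • h)) - ψ β) / ε)
      =ᶠ[𝓝[>] (0:ℝ)] (fun ε : ℝ => c * ((ψ (β + (c * ε) • h) - ψ β) / (c * ε))) := by
    filter_upwards [self_mem_nhdsWithin] with ε (hε : 0 < ε)
    rw [smul_smul, mul_comm ε c]
    field_simp
  exact tendsto_nhds_unique (h2.congr' heq) h3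

/-- Mirror descent rate without convexity. -/
theorem mirror_descent_rate {p : ℕ}
    (f φ : EuclideanSpace ℝ (Fin p) → ℝ)
    (hφ1 : ContDiff ℝ 1 φ) (hφ2 : StrictConvexOn ℝ Set.univ φ)
    (hfc : Continuous f)
    (δf : EuclideanSpace ℝ (Fin p) → EuclideanSpace ℝ (Fin p) → ℝ)
    (hf : ∀ β h, HasDirDeriv f β h (δf β h))
    (L ρ : ℝ) (hL : 0 < L)
    (hsmooth : ∀ β γ, GBF f δf β γ ≤ L * ((BregDiv φ β γ + BregDiv φ γ β) / 2))
    (hinf : ∀ β, 0 ≤ f β)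
    (hρ : L / 2 < ρ)
    (β : ℕ → EuclideanSpace ℝ (Fin p))
    (hmin : ∀ t : ℕ, ∀ x,
      f (β (t+1)) + ρ * BregDiv φ (β (t+1)) (β t) - GBF f δf (β (t+1)) (β t)
        ≤ f x + ρ * BregDiv φ x (β t) - GBF f δf x (β t)) :
    ∀ T : ℕ,
      (∑ t ∈ Finset.range (T+1),
          (BregDiv φ (β t) (β (t+1)) + BregDiv φ (β (t+1)) (β t)) / 2) / ((T : ℝ) + 1)
        ≤ f (β 0) / (((T : ℝ) + 1) * (2 * ρ - L)) := by
  have hφd : ∀ x, HasGradientAt φ (gradient φ x) x :=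
    fun x => ((hφ1.differentiable one_ne_zero) x).hasGradientAt
  -- key one-step decrease
  have key : ∀ t : ℕ, f (β (t+1)) + (2*ρ - L) *
      ((BregDiv φ (β t) (β (t+1)) + BregDiv φ (β (t+1)) (β t)) / 2) ≤ f (β t) := by
    intro t
    set b0 := β t with hb0
    set b1 := β (t+1) with hb1
    set d := b1 - b0 with hd
    set c := δf b0 d with hc
    set g0 := gradient φ b0 with hg0
    set g1 := gradient φ b1 with hg1
    -- the auxiliary function
    set G : ℝ → ℝ := fun ε => ρ * (φ (b1 - ε • d) - φ b1 + ε * ⟪g0, d⟫) - ε * c with hG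
    have hG0 : G 0 = 0 := by simp [hG]
    have hGpos : ∀ ε ∈ Ioo (0:ℝ) 1, 0 ≤ G ε := by
      intro ε hε
      have hmin' := hmin t (b1 - ε • d)
      have hx : b1 - ε • d - b0 = (1 - ε) • d := by
        rw [sub_smul, one_smul, hd]; abel
      have hδ : δf b0 ((1 - ε) • d) = (1 - ε) * c :=
        dirDeriv_smul f b0 d (1-ε) c _ (by linarith [hε.2]) (hf b0 d) (hf b0 ((1-ε) • d))
      rw [← hb0, ← hb1] at hmin'
      simp only [GBF, BregDiv, hx, hδ] at hmin'
      rw [real_inner_smul_right] at hmin'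
      have hbb : b1 - b0 = d := rfl
      rw [hbb] at hmin'
      simp only [hG]
      nlinarith [hmin']
    -- derivative of G at 0
    have hline : HasDerivAt (fun ε : ℝ => b1 - ε • d) (-d) 0 := by
      have h1 : HasDerivAt (fun ε : ℝ => ε • d) d 0 := by
        simpa using (hasDerivAt_id (0:ℝ)).smul_const d
      simpa using h1.const_sub b1
    have hφfd : HasFDerivAt φ (InnerProductSpace.toDual ℝ _ g1) ((fun ε : ℝ => b1 - ε • d) 0) := by
      have := (hφd b1).hasFDerivAt
      simpa [hg1] using this
    have hcomp : HasDerivAt (fun ε : ℝ => φ (b1 - ε • d)) (-⟪g1, d⟫) 0 := by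
      have := hφfd.comp_hasDerivAt 0 hline
      simpa [Function.comp_def, InnerProductSpace.toDual_apply_apply, inner_neg_right] using this
    have hGd : HasDerivAt G (ρ * (-⟪g1, d⟫ + ⟪g0, d⟫) - c) 0 := by
      have h1 : HasDerivAt (fun ε : ℝ => φ (b1 - ε • d) - φ b1 + ε * ⟪g0, d⟫)
          (-⟪g1, d⟫ + ⟪g0, d⟫) 0 :=
        (hcomp.sub_const (φ b1)).add (by simpa using (hasDerivAt_id (0:ℝ)).mul_const ⟪g0, d⟫)
      have h2 : HasDerivAt (fun ε : ℝ => ε * c) c 0 := by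
        simpa using (hasDerivAt_id (0:ℝ)).mul_const c
      exact (h1.const_mul ρ).sub h2
    -- derivative is nonnegative
    have hder : 0 ≤ ρ * (-⟪g1, d⟫ + ⟪g0, d⟫) - c := by
      have hslope := hasDerivAt_iff_tendsto_slope.mp hGd
      have hmono : 𝓝[>] (0:ℝ) ≤ 𝓝[≠] (0:ℝ) :=
        nhdsWithin_mono _ (fun x hx => ne_of_gt hx)
      refine ge_of_tendsto (hslope.mono_left hmono) ?_
      filter_upwards [Ioo_mem_nhdsGT_of_mem (Set.left_mem_Ico.mpr one_pos)] with ε hε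
      have : slope G 0 ε = G ε / ε := by
        rw [slope_def_field]; simp [hG0]
      rw [this]
      exact div_nonneg (hGpos ε hε) hε.1.le
    -- sum of Bregman divergences
    have hAB : BregDiv φ b0 b1 + BregDiv φ b1 b0 = ⟪g1, d⟫ - ⟪g0, d⟫ := by
      have h01 : b0 - b1 = -d := by rw [hd]; abel
      simp only [BregDiv, h01, inner_neg_right, ← hg0, ← hg1]
      have : b1 - b0 = d := rfl
      rw [this]; ring
    have hsm := hsmooth b1 b0
    simp only [GBF] at hsm
    have hbb : b1 - b0 = d := rfl
    rw [hbb] at hsm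
    nlinarith [hsm, hder, hAB]
  -- telescoping
  have hsum : ∀ n : ℕ, (2*ρ - L) * ∑ t ∈ Finset.range n,
      ((BregDiv φ (β t) (β (t+1)) + BregDiv φ (β (t+1)) (β t)) / 2) + f (β n) ≤ f (β 0) := by
    intro n
    induction n with
    | zero => simp
    | succ n ih =>
      rw [Finset.sum_range_succ, mul_add]
      linarith [key n, ih]
  intro T
  have h1 := hsum (T+1)
  have h2 := hinf (β (T+1))
  have hpos : (0:ℝ) < (T:ℝ) + 1 := by positivity
  have hρL : (0:ℝ) < 2*ρ - L := by linarith
  rw [div_le_div_iff₀ hpos (by positivity)]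
  have h3 : (2*ρ - L) * ∑ t ∈ Finset.range (T+1),
      ((BregDiv φ (β t) (β (t+1)) + BregDiv φ (β (t+1)) (β t)) / 2) ≤ f (β 0) := by
    push_cast at h1 ⊢
    linarith
  calc (∑ t ∈ Finset.range (T+1),
        (BregDiv φ (β t) (β (t+1)) + BregDiv φ (β (t+1)) (β t)) / 2) * (((T:ℝ)+1) * (2*ρ - L))
      = ((2*ρ - L) * ∑ t ∈ Finset.range (T+1),
        ((BregDiv φ (β t) (β (t+1)) + BregDiv φ (β (t+1)) (β t)) / 2)) * ((T:ℝ)+1) := by ring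
    _ ≤ f (β 0) * ((T:ℝ)+1) := mul_le_mul_of_nonneg_right h3 hpos.le
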